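/- For m ∈ (0,1), nonnegative integers x1, x2 with r = sqrt(x1^2 + x2^2) > 0, the generating function of visits V_m(x1,x2) = Σ_{n≥0} m^n P(S_n = (x1,x2)) of the simple random walk admits the Bessel integral representation V_m(x1,x2) = r ∫_0^∞ e^{−r u} I_{x1}((m r/2) u) I_{x2}((m r/2) u) du, where I_n is the modified Bessel function of the first kind I_n(z) = Σ_{k≥0} (1/(k!(n+k)!)) (z/2)^{n+2k}. -/

import Mathlib

open Finset MeasureTheory Set

/-- `srwProb n x` is the probability that the simple symmetric random walk on ℤ²,
started at the origin, is at `x` at time `n`. -/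
noncomputable def srwProb : ℕ → ℤ × ℤ → ℝ
  | 0, x => if x = 0 then 1 else 0
  | n + 1, x =>
      (srwProb n (x + (1, 0)) + srwProb n (x - (1, 0)) +
        srwProb n (x + (0, 1)) + srwProb n (x - (0, 1))) / 4

/-- Modified Bessel function of the first kind of integer order:
`I_n(z) = ∑ₖ (1/(k!(n+k)!)) (z/2)^{n+2k}`. -/
noncomputable def besselI (n : ℕ) (z : ℝ) : ℝ :=
  ∑' k : ℕ, (1 / ((Nat.factorial k : ℝ) * (Nat.factorial (n + k)))) * (z / 2) ^ (n + 2 * k)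


def walk1 : ℕ → ℤ → ℕ
  | 0, x => if x = 0 then 1 else 0
  | i + 1, x => walk1 i (x + 1) + walk1 i (x - 1)

def walk2 : ℕ → ℤ × ℤ → ℕ
  | 0, x => if x = 0 then 1 else 0
  | n + 1, x =>
      walk2 n (x + (1, 0)) + walk2 n (x - (1, 0)) +
        walk2 n (x + (0, 1)) + walk2 n (x - (0, 1))

def wA (i p : ℕ) : ℕ := if p ≤ i ∧ (i - p) % 2 = 0 then Nat.choose i ((i - p) / 2) else 0

lemma key (i p : ℕ) (hp : 1 ≤ p) : wA i (p+1) + wA i (p-1) = wA (i+1) p := by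
  unfold wA
  rcases Nat.lt_or_ge i (p+1) with h | h
  · rw [if_neg (by omega)]
    rcases Nat.lt_or_ge i (p-1) with h2 | h2
    · rw [if_neg (by omega), if_neg (by omega)]
    · have : i = p - 1 ∨ i = p := by omega
      rcases this with h3 | h3
      · rw [if_pos (by omega), if_pos (by omega)]
        have e1 : (i - (p-1))/2 = 0 := by omega
        have e2 : (i + 1 - p)/2 = 0 := by omega
        rw [e1, e2]; simp
      · rw [if_neg (by omega), if_neg (by omega)]
  · by_cases hpar : (i - (p+1)) % 2 = 0
    · rw [if_pos ⟨h, hpar⟩, if_pos (by omega), if_pos (by omega)]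
      have h1 : (i - (p-1))/2 = (i-(p+1))/2 + 1 := by omega
      have h2 : (i+1-p)/2 = (i-(p+1))/2 + 1 := by omega
      rw [h1, h2, Nat.choose_succ_succ, Nat.add_comm]
    · rw [if_neg (by omega), if_neg (by omega), if_neg (by omega)]

lemma key0 (i : ℕ) : wA i 1 + wA i 1 = wA (i+1) 0 := by
  unfold wA
  by_cases hpar : i % 2 = 1
  · rw [if_pos (by omega), if_pos (by omega)]
    have h2 : (i+1-0)/2 = (i-1)/2 + 1 := by omega
    rw [h2, Nat.choose_succ_succ]
    congr 1
    rw [Nat.succ_eq_add_one, show (i-1)/2 + 1 = i - (i-1)/2 from by omega,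
      Nat.choose_symm (by omega)]
  · rw [if_neg (by omega), if_neg (by omega)]

lemma walk1_closed : ∀ (i : ℕ) (x : ℤ), walk1 i x = wA i x.natAbs := by
  intro i
  induction i with
  | zero =>
      intro x
      simp only [walk1, wA]
      split_ifs with h1 h2 h2 <;> simp_all
  | succ i IH =>
      intro x
      show walk1 i (x+1) + walk1 i (x-1) = _
      rw [IH, IH]
      rcases lt_trichotomy x 0 with hx | hx | hx
      · have h1 : (x+1).natAbs = x.natAbs - 1 := by omega
        have h2 : (x-1).natAbs = x.natAbs + 1 := by omega
        rw [h1, h2, Nat.add_comm, key i x.natAbs (by omega)]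
      · subst hx
        norm_num
        exact key0 i
      · have h1 : (x+1).natAbs = x.natAbs + 1 := by omega
        have h2 : (x-1).natAbs = x.natAbs - 1 := by omega
        rw [h1, h2, key i x.natAbs (by omega)]

lemma walk2_decomp : ∀ (n : ℕ) (a b : ℤ),
    walk2 n (a, b) = ∑ i ∈ range (n+1), Nat.choose n i * walk1 i a * walk1 (n-i) b := by
  intro n
  induction n with
  | zero =>
      intro a b
      by_cases ha : a = 0 <;> by_cases hb : b = 0 <;>
        simp [walk2, walk1, ha, hb, Prod.ext_iff]
  | succ n IH =>
      intro a b
      show walk2 n ((a,b) + (1,0)) + walk2 n ((a,b) - (1,0)) +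
        walk2 n ((a,b) + (0,1)) + walk2 n ((a,b) - (0,1)) = _
      simp only [Prod.mk_add_mk, Prod.mk_sub_mk, add_zero, sub_zero]
      rw [IH, IH, IH, IH]
      have L : ∑ i ∈ range (n+1), Nat.choose n i * walk1 i (a+1) * walk1 (n-i) b +
          ∑ i ∈ range (n+1), Nat.choose n i * walk1 i (a-1) * walk1 (n-i) b +
          ∑ i ∈ range (n+1), Nat.choose n i * walk1 i a * walk1 (n-i) (b+1) +
          ∑ i ∈ range (n+1), Nat.choose n i * walk1 i a * walk1 (n-i) (b-1) =
          (∑ j ∈ range (n+1), Nat.choose n j * walk1 (j+1) a * walk1 (n-j) b) +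
          ∑ i ∈ range (n+1), Nat.choose n i * walk1 i a * walk1 ((n-i)+1) b := by
        rw [← sum_add_distrib, ← sum_add_distrib, ← sum_add_distrib, ← sum_add_distrib]
        refine sum_congr rfl fun i _ => ?_
        simp only [walk1]
        ring
      rw [L]
      rw [Finset.sum_range_succ' (fun i => Nat.choose (n+1) i * walk1 i a * walk1 (n+1-i) b) (n+1)]
      have hsplit : ∑ j ∈ range (n+1), Nat.choose (n+1) (j+1) * walk1 (j+1) a * walk1 (n+1-(j+1)) b
          = (∑ j ∈ range (n+1), Nat.choose n j * walk1 (j+1) a * walk1 (n-j) b)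
            + ∑ j ∈ range (n+1), Nat.choose n (j+1) * walk1 (j+1) a * walk1 (n-j) b := by
        rw [← sum_add_distrib]
        refine sum_congr rfl fun j hj => ?_
        have hj' := mem_range.mp hj
        rw [Nat.choose_succ_succ, show n+1-(j+1) = n-j from by omega]
        ring
      rw [hsplit]
      have hB : (∑ j ∈ range (n+1), Nat.choose n (j+1) * walk1 (j+1) a * walk1 (n-j) b)
          + Nat.choose (n+1) 0 * walk1 0 a * walk1 (n+1-0) b
          = ∑ i ∈ range (n+1), Nat.choose n i * walk1 i a * walk1 ((n-i)+1) b := by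
        rw [Finset.sum_range_succ' (fun i => Nat.choose n i * walk1 i a * walk1 ((n-i)+1) b) n]
        congr 1
        · rw [Finset.sum_range_succ]
          simp only [Nat.choose_succ_self, Nat.zero_mul, zero_mul, add_zero]
          refine sum_congr rfl fun j hj => ?_
          have hj' := mem_range.mp hj
          rw [show (n - (j+1)) + 1 = n - j from by omega]
        · simp
      rw [add_assoc, hB]

def TT (p q t : ℕ) : ℕ :=
  ∑ k ∈ range (t+1),
    (p+q+2*t).choose (p+2*k) * (p+2*k).choose k * (q+2*(t-k)).choose (t-k)

lemma walk2_nat (n p q : ℕ) :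
    walk2 n ((p : ℤ), (q : ℤ)) = ∑ i ∈ range (n+1), Nat.choose n i * wA i p * wA (n-i) q := by
  rw [walk2_decomp]
  refine sum_congr rfl fun i _ => ?_
  rw [walk1_closed, walk1_closed, Int.natAbs_natCast, Int.natAbs_natCast]

lemma walk2_closed (p q t : ℕ) : walk2 (p+q+2*t) ((p : ℤ), (q : ℤ)) = TT p q t := by
  set N := p+q+2*t with hN
  rw [walk2_nat]
  have hsub : (range (t+1)).image (fun k => p + 2*k) ⊆ range (N+1) := by
    intro i hi
    rcases mem_image.mp hi with ⟨k, hk, rfl⟩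
    have := mem_range.mp hk
    exact mem_range.mpr (by omega)
  have himg : ∀ i ∈ range (N+1), i ∉ (range (t+1)).image (fun k => p + 2*k) →
      Nat.choose N i * wA i p * wA (N-i) q = 0 := by
    intro i hi hni
    rcases Nat.eq_zero_or_pos (wA i p) with h | h
    · rw [h]; simp
    · rcases Nat.eq_zero_or_pos (wA (N-i) q) with h2 | h2
      · rw [h2]; simp
      · exfalso
        unfold wA at h h2
        by_cases c1 : p ≤ i ∧ (i - p) % 2 = 0
        swap
        · rw [if_neg c1] at h; omega
        by_cases c2 : q ≤ N - i ∧ (N - i - q) % 2 = 0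
        swap
        · rw [if_neg c2] at h2; omega
        apply hni
        have hiN := mem_range.mp hi
        exact mem_image.mpr ⟨(i-p)/2, mem_range.mpr (by omega), by omega⟩
  rw [← Finset.sum_subset hsub himg,
    Finset.sum_image (fun a _ b _ h => by omega)]
  refine sum_congr rfl fun k hk => ?_
  have hk' := mem_range.mp hk
  have e1 : wA (p+2*k) p = (p+2*k).choose k := by
    unfold wA
    rw [if_pos ⟨by omega, by omega⟩, show (p+2*k-p)/2 = k from by omega]
  have e2 : N - (p+2*k) = q + 2*(t-k) := by omega
  have e3 : wA (q+2*(t-k)) q = (q+2*(t-k)).choose (t-k) := by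
    unfold wA
    rw [if_pos ⟨by omega, by omega⟩, show (q+2*(t-k)-q)/2 = t-k from by omega]
  rw [e1, e2, e3]

lemma walk2_vanish (p q n : ℕ) (h : ∀ t, n ≠ p+q+2*t) : walk2 n ((p : ℤ), (q : ℤ)) = 0 := by
  rw [walk2_nat]
  refine sum_eq_zero fun i hi => ?_
  have hi' := mem_range.mp hi
  unfold wA
  split_ifs with c1 c2
  · exact absurd (show n = p+q+2*((i-p)/2 + ((n-i)-q)/2) from by omega) (h _)
  all_goals simp

lemma walk2_le (n : ℕ) : ∀ x : ℤ × ℤ, walk2 n x ≤ 4^n := by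
  induction n with
  | zero => intro x; simp only [walk2, pow_zero]; split_ifs <;> omega
  | succ n IH =>
      intro x
      show walk2 n _ + walk2 n _ + walk2 n _ + walk2 n _ ≤ 4^(n+1)
      have h1 := IH (x + (1,0)); have h2 := IH (x - (1,0))
      have h3 := IH (x + (0,1)); have h4 := IH (x - (0,1))
      have : (4:ℕ)^(n+1) = 4^n + 4^n + 4^n + 4^n := by ring
      omega

lemma choose_id (p q t k : ℕ) (hk : k ≤ t) :
    ((p+q+2*t).choose (p+2*k) * (p+2*k).choose k * (q+2*(t-k)).choose (t-k)) *
      (Nat.factorial k * Nat.factorial (p+k) * Nat.factorial (t-k) * Nat.factorial (q+(t-k)))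
    = Nat.factorial (p+q+2*t) := by
  have h1 : (p+2*k).choose k * (Nat.factorial k * Nat.factorial (p+k)) =
      Nat.factorial (p+2*k) := by
    have h := Nat.choose_mul_factorial_mul_factorial (show k ≤ p+2*k from by omega)
    rw [show p+2*k-k = p+k from by omega] at h
    rw [← h]; ring
  have h2 : (q+2*(t-k)).choose (t-k) * (Nat.factorial (t-k) * Nat.factorial (q+(t-k))) =
      Nat.factorial (q+2*(t-k)) := by
    have h := Nat.choose_mul_factorial_mul_factorial (show t-k ≤ q+2*(t-k) from by omega)
    rw [show q+2*(t-k)-(t-k) = q+(t-k) from by omega] at h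
    rw [← h]; ring
  have h3 : (p+q+2*t).choose (p+2*k) *
      (Nat.factorial (p+2*k) * Nat.factorial (q+2*(t-k))) = Nat.factorial (p+q+2*t) := by
    have h := Nat.choose_mul_factorial_mul_factorial (show p+2*k ≤ p+q+2*t from by omega)
    rw [show p+q+2*t-(p+2*k) = q+2*(t-k) from by omega] at h
    rw [← h]; ring
  calc ((p+q+2*t).choose (p+2*k) * (p+2*k).choose k * (q+2*(t-k)).choose (t-k)) *
      (Nat.factorial k * Nat.factorial (p+k) * Nat.factorial (t-k) * Nat.factorial (q+(t-k)))
      = (p+q+2*t).choose (p+2*k) *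
        (((p+2*k).choose k * (Nat.factorial k * Nat.factorial (p+k))) *
          ((q+2*(t-k)).choose (t-k) * (Nat.factorial (t-k) * Nat.factorial (q+(t-k))))) := by
        ring
    _ = Nat.factorial (p+q+2*t) := by rw [h1, h2]; exact h3

noncomputable def EE (p q : ℕ) (t : ℕ) : ℝ :=
  ∑ k ∈ range (t+1),
    1 / ((Nat.factorial k : ℝ) * (Nat.factorial (p+k)) * (Nat.factorial (t-k))
      * (Nat.factorial (q+(t-k))))

lemma EE_nonneg (p q t : ℕ) : 0 ≤ EE p q t := by
  apply sum_nonneg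
  intro k _
  positivity

lemma integrableOn_pow_exp (N : ℕ) {r : ℝ} (hr : 0 < r) :
    IntegrableOn (fun u : ℝ => u ^ N * Real.exp (-(r*u))) (Ioi 0) := by
  have h := integrableOn_rpow_mul_exp_neg_mul_rpow (lt_of_lt_of_le neg_one_lt_zero (Nat.cast_nonneg N))
    one_pos hr
  apply h.congr_fun _ measurableSet_Ioi
  intro u hu
  have hu' : (0:ℝ) < u := hu
  simp only [Real.rpow_natCast, Real.rpow_one, neg_mul]

lemma integral_pow_exp (N : ℕ) {r : ℝ} (hr : 0 < r) :
    ∫ u in Ioi (0:ℝ), u ^ N * Real.exp (-(r*u)) = Nat.factorial N / r^(N+1) := by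
  have h := Real.integral_rpow_mul_exp_neg_mul_Ioi (a := (N:ℝ)+1) (by positivity) hr
  simp only [add_sub_cancel_right, Real.rpow_natCast] at h
  rw [h, Real.Gamma_nat_eq_factorial,
    show ((N:ℝ)+1) = ((N+1 : ℕ) : ℝ) from by push_cast; ring,
    Real.rpow_natCast, one_div, inv_pow, inv_mul_eq_div]

lemma summable_norm_bessel (p : ℕ) (w : ℝ) :
    Summable fun k : ℕ =>
      ‖(1 / ((Nat.factorial k : ℝ) * (Nat.factorial (p+k)))) * w ^ (p + 2*k)‖ := by
  apply Summable.of_nonneg_of_le (fun k => norm_nonneg _) (fun k => ?_)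
    ((Real.summable_pow_div_factorial (|w|^2)).mul_left (|w|^p))
  rw [norm_mul, norm_pow, Real.norm_eq_abs, Real.norm_eq_abs,
    abs_of_nonneg (show (0:ℝ) ≤ 1 / ((Nat.factorial k : ℝ) * (Nat.factorial (p+k))) by positivity)]
  have h2 : (1:ℝ)/((Nat.factorial k : ℝ)*(Nat.factorial (p+k))) ≤ 1/(Nat.factorial k : ℝ) := by
    apply one_div_le_one_div_of_le (by positivity)
    exact le_mul_of_one_le_right (by positivity)
      (by exact_mod_cast Nat.one_le_iff_ne_zero.mpr (Nat.factorial_ne_zero _))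
  calc (1 / ((Nat.factorial k : ℝ) * (Nat.factorial (p+k)))) * |w| ^ (p + 2*k)
      ≤ (1/(Nat.factorial k : ℝ)) * |w| ^ (p + 2*k) :=
        mul_le_mul_of_nonneg_right h2 (by positivity)
    _ = |w|^p * ((|w|^2)^k / (Nat.factorial k : ℝ)) := by
        rw [pow_add, pow_mul]; ring

lemma srwProb_eq : ∀ (n : ℕ) (x : ℤ × ℤ), srwProb n x = (walk2 n x : ℝ) / 4^n := by
  intro n
  induction n with
  | zero =>
      intro x
      simp only [srwProb, walk2, pow_zero]
      split_ifs <;> simp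
  | succ n IH =>
      intro x
      show (srwProb n (x + (1, 0)) + srwProb n (x - (1, 0)) +
        srwProb n (x + (0, 1)) + srwProb n (x - (0, 1))) / 4 = _
      rw [IH, IH, IH, IH]
      simp only [walk2]
      push_cast
      rw [← add_div, ← add_div, ← add_div, div_div, pow_succ]

lemma TT_eq (p q t : ℕ) :
    (TT p q t : ℝ) = (Nat.factorial (p+q+2*t) : ℝ) * EE p q t := by
  rw [TT, EE, Finset.mul_sum]
  push_cast
  refine sum_congr rfl fun k hk => ?_
  have hk' := mem_range.mp hk
  have idN := choose_id p q t k (by omega)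
  have idR : (((p+q+2*t).choose (p+2*k) : ℝ) * ((p+2*k).choose k : ℝ) *
      ((q+2*(t-k)).choose (t-k) : ℝ)) *
      ((Nat.factorial k : ℝ) * (Nat.factorial (p+k) : ℝ) * (Nat.factorial (t-k) : ℝ) *
        (Nat.factorial (q+(t-k)) : ℝ)) = (Nat.factorial (p+q+2*t) : ℝ) := by
    exact_mod_cast congrArg (Nat.cast : ℕ → ℝ) idN
  rw [mul_one_div, eq_div_iff (by positivity)]
  linear_combination idR

/-- Bessel integral representation of the generating function of visits:
`V_m(x₁,x₂) = r ∫₀^∞ e^{-ru} I_{x₁}((mr/2)u) I_{x₂}((mr/2)u) du`, `r = √(x₁²+x₂²)`. -/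
theorem srw_visits_bessel (m : ℝ) (hm : m ∈ Set.Ioo (0 : ℝ) 1) (x1 x2 : ℕ)
    (r : ℝ) (hr : r = Real.sqrt ((x1 : ℝ) ^ 2 + (x2 : ℝ) ^ 2)) (hrpos : 0 < r) :
    ∑' n : ℕ, m ^ n * srwProb n ((x1 : ℤ), (x2 : ℤ)) =
      r * ∫ u in Set.Ioi (0 : ℝ),
        Real.exp (-r * u) * besselI x1 (m * r / 2 * u) * besselI x2 (m * r / 2 * u) := by
  obtain ⟨hm0, hm1⟩ := hm
  have hject : Function.Injective (fun t : ℕ => x1 + x2 + 2*t) := by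
    intro a b hab
    simp only at hab
    omega
  have hL : (∑' n : ℕ, m ^ n * srwProb n ((x1 : ℤ), (x2 : ℤ)))
      = ∑' t : ℕ, (m/4)^(x1+x2+2*t) * (TT x1 x2 t : ℝ) := by
    have hsupp : Function.support (fun n : ℕ => m ^ n * srwProb n ((x1:ℤ),(x2:ℤ)))
        ⊆ Set.range (fun t : ℕ => x1 + x2 + 2*t) := by
      intro n hn
      by_contra hcon
      apply hn
      have hno : ∀ t : ℕ, n ≠ x1 + x2 + 2*t := fun t ht => hcon ⟨t, ht.symm⟩
      show m ^ n * srwProb n ((x1:ℤ),(x2:ℤ)) = 0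
      rw [srwProb_eq, walk2_vanish x1 x2 n hno]
      simp
    rw [← hject.tsum_eq hsupp]
    refine tsum_congr fun t => ?_
    show m ^ (x1+x2+2*t) * srwProb (x1+x2+2*t) ((x1:ℤ),(x2:ℤ))
      = (m/4)^(x1+x2+2*t) * (TT x1 x2 t : ℝ)
    rw [srwProb_eq, walk2_closed x1 x2 t, div_pow]
    ring
  have hTle : ∀ t : ℕ, (TT x1 x2 t : ℝ) ≤ 4^(x1+x2+2*t) := by
    intro t
    rw [← walk2_closed x1 x2 t]
    exact_mod_cast walk2_le (x1+x2+2*t) ((x1:ℤ),(x2:ℤ))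
  have hsumS : Summable (fun t : ℕ => (m/4)^(x1+x2+2*t) * (TT x1 x2 t : ℝ)) := by
    have hgeo : Summable (fun t : ℕ => m^(x1+x2) * (m^2)^t) :=
      (summable_geometric_of_lt_one (by positivity) (by nlinarith)).mul_left _
    apply Summable.of_nonneg_of_le (fun t => by positivity) (fun t => ?_) hgeo
    calc (m/4)^(x1+x2+2*t) * (TT x1 x2 t : ℝ)
        ≤ (m/4)^(x1+x2+2*t) * 4^(x1+x2+2*t) :=
          mul_le_mul_of_nonneg_left (hTle t) (by positivity)
      _ = m^(x1+x2+2*t) := by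
          rw [div_pow, div_mul_cancel₀ _ (by positivity)]
      _ = m^(x1+x2) * (m^2)^t := by rw [pow_add, pow_mul]
  have hpt : ∀ u : ℝ,
      Real.exp (-r*u) * besselI x1 (m*r/2*u) * besselI x2 (m*r/2*u)
      = ∑' t : ℕ, Real.exp (-r*u) * (EE x1 x2 t * (m*r/2*u/2)^(x1+x2+2*t)) := by
    intro u
    rw [besselI, besselI, mul_assoc,
      tsum_mul_tsum_eq_tsum_sum_antidiagonal_of_summable_norm
        (summable_norm_bessel x1 (m*r/2*u/2)) (summable_norm_bessel x2 (m*r/2*u/2)),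
      ← tsum_mul_left]
    refine tsum_congr fun t => ?_
    congr 1
    rw [Finset.Nat.sum_antidiagonal_eq_sum_range_succ_mk, EE, Finset.sum_mul]
    refine sum_congr rfl fun k hk => ?_
    have hk' := mem_range.mp hk
    simp only
    rw [show x1+x2+2*t = (x1+2*k) + (x2+2*(t-k)) from by omega, pow_add]
    ring
  have hint : ∀ t : ℕ, IntegrableOn
      (fun u : ℝ => Real.exp (-r*u) * (EE x1 x2 t * (m*r/2*u/2)^(x1+x2+2*t))) (Ioi 0) := by
    intro t
    have base := (integrableOn_pow_exp (x1+x2+2*t) hrpos).const_mul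
      (EE x1 x2 t * (m*r/4)^(x1+x2+2*t))
    refine MeasureTheory.IntegrableOn.congr_fun base (fun u hu => ?_) measurableSet_Ioi
    rw [show m*r/2*u/2 = (m*r/4)*u from by ring, mul_pow]
    ring
  have hval : ∀ t : ℕ, (∫ u in Ioi (0:ℝ),
      Real.exp (-r*u) * (EE x1 x2 t * (m*r/2*u/2)^(x1+x2+2*t)))
      = (1/r) * ((m/4)^(x1+x2+2*t) * (TT x1 x2 t : ℝ)) := by
    intro t
    have hrw : ∀ u : ℝ, Real.exp (-r*u) * (EE x1 x2 t * (m*r/2*u/2)^(x1+x2+2*t))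
        = (EE x1 x2 t * (m*r/4)^(x1+x2+2*t)) * (u^(x1+x2+2*t) * Real.exp (-(r*u))) := by
      intro u
      rw [show m*r/2*u/2 = (m*r/4)*u from by ring, mul_pow]
      ring
    simp only [hrw]
    rw [MeasureTheory.integral_const_mul, integral_pow_exp (x1+x2+2*t) hrpos, TT_eq]
    rw [show m*r/4 = (m/4)*r from by ring, mul_pow, pow_succ]
    field_simp
  have hnn : ∀ t : ℕ, 0 ≤ᵐ[volume.restrict (Ioi (0:ℝ))]
      (fun u : ℝ => Real.exp (-r*u) * (EE x1 x2 t * (m*r/2*u/2)^(x1+x2+2*t))) := by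
    intro t
    filter_upwards [ae_restrict_mem measurableSet_Ioi] with u hu
    have hu' : (0:ℝ) < u := hu
    have hw : (0:ℝ) ≤ m*r/2*u/2 := by positivity
    exact mul_nonneg (Real.exp_pos _).le
      (mul_nonneg (EE_nonneg _ _ _) (pow_nonneg hw _))
  have hswap : (∫ u in Ioi (0:ℝ),
        Real.exp (-r*u) * besselI x1 (m*r/2*u) * besselI x2 (m*r/2*u))
      = ∑' t : ℕ, ∫ u in Ioi (0:ℝ),
        Real.exp (-r*u) * (EE x1 x2 t * (m*r/2*u/2)^(x1+x2+2*t)) := by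
    simp only [hpt]
    apply MeasureTheory.integral_tsum
    · intro t
      apply Continuous.aestronglyMeasurable
      fun_prop
    · have heval : ∀ t : ℕ, (∫⁻ u, ‖Real.exp (-r*u) * (EE x1 x2 t * (m*r/2*u/2)^(x1+x2+2*t))‖ₑ
          ∂(volume.restrict (Ioi (0:ℝ))))
          = ENNReal.ofReal ((1/r) * ((m/4)^(x1+x2+2*t) * (TT x1 x2 t : ℝ))) := by
        intro t
        have h1 : (∫⁻ u, ‖Real.exp (-r*u) * (EE x1 x2 t * (m*r/2*u/2)^(x1+x2+2*t))‖ₑ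
            ∂(volume.restrict (Ioi (0:ℝ))))
            = ∫⁻ u, ENNReal.ofReal
              (Real.exp (-r*u) * (EE x1 x2 t * (m*r/2*u/2)^(x1+x2+2*t)))
              ∂(volume.restrict (Ioi (0:ℝ))) := by
          refine lintegral_congr_ae ((hnn t).mono fun u hu => ?_)
          simp only [← ofReal_norm]
          rw [Real.norm_of_nonneg hu]
        rw [h1, ← ofReal_integral_eq_lintegral_ofReal (hint t) (hnn t), hval t]
      simp only [heval]
      rw [← ENNReal.ofReal_tsum_of_nonneg (fun t => by positivity) (hsumS.mul_left (1/r))]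
      exact ENNReal.ofReal_ne_top
  rw [hL, hswap, ← tsum_mul_left]
  refine tsum_congr fun t => ?_
  rw [hval t, ← mul_assoc, mul_one_div, div_self hrpos.ne', one_mul]
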